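/- Let n ≥ 1 be an integer, let A : Fin n → Fin n → ℝ, let r, γ ∈ ℝ with r ≠ 0, and set x̂ = (r−1)/r. Let S ⊆ Fin n be a set with A(α, β) = 0 for all α, β ∈ S. Define F : (Fin n → ℝ) → (Fin n → ℝ) by F(x)(k) = r·x(k)·(1 − x(k))·exp(−γ·Σ_{k̂} A(k̂, k)·x(k̂)), and define ξ : Fin n → ℝ by ξ(k) = x̂ if k ∈ S and ξ(k) = 0 otherwise. Let J be the n×n Jacobian matrix of F at ξ, i.e. J_{k,l} = ∂F(x)(k)/∂x(l) evaluated at x = ξ. Then the characteristic polynomial of J is det(λI − J) = (λ − (2 − r))^{|S|} · ∏_{k ∉ S} (λ − r·exp(−γ·x̂·Σ_{α ∈ S} A(α, k))). In particular the eigenvalues of J are 2 − r with multiplicity |S| (the active directions) and, for each inactive node k, the value r·exp(−γ·x̂·n_s(k)), where n_s(k) = Σ_{α ∈ S} A(α, k) is the suppression number of k. -/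

import Mathlib

open Polynomial

private lemma fderiv_logistic (n : ℕ) (A : Fin n → Fin n → ℝ) (r γ : ℝ) (k l : Fin n)
    (ξ : Fin n → ℝ) :
    fderiv ℝ (fun x : Fin n → ℝ =>
        r * x k * (1 - x k) * Real.exp (-γ * ∑ khat, A khat k * x khat)) ξ (Pi.single l 1)
    = ((if k = l then r * (1 - 2 * ξ k) else 0) + r * ξ k * (1 - ξ k) * (-γ * A l k))
        * Real.exp (-γ * ∑ khat, A khat k * ξ khat) := by
  have pk : ∀ m : Fin n, HasFDerivAt (fun x : Fin n → ℝ => x m)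
      (ContinuousLinearMap.proj m : (Fin n → ℝ) →L[ℝ] ℝ) ξ :=
    fun m => hasFDerivAt_apply m ξ
  have h1 := (pk k).const_mul r
  have h2 := (pk k).const_sub 1
  have h3 := h1.fun_mul h2
  have hsum : HasFDerivAt (fun x : Fin n → ℝ => ∑ khat, A khat k * x khat)
      (∑ khat, A khat k • (ContinuousLinearMap.proj khat : (Fin n → ℝ) →L[ℝ] ℝ)) ξ :=
    HasFDerivAt.fun_sum (fun m _ => (pk m).const_mul (A m k))
  have h4 := hsum.const_mul (-γ)
  have h5 := h4.exp
  have h6 := h3.fun_mul h5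
  rw [h6.fderiv]
  simp [Pi.single_apply, Finset.mul_sum, mul_comm, eq_comm]
  by_cases h : k = l <;> simp [h] <;> ring

/-- the Jacobian matrix `J` of the coupled logistic map `F` at
the fixed point `ξ` (active set `S`, an independent set) has characteristic
polynomial `(λ − (2−r))^{|S|} · ∏_{k ∉ S} (λ − r·exp(−γ·x̂·Σ_{α∈S} A(α,k)))`. -/
theorem stmt_16 (n : ℕ) (hn : 1 ≤ n) (A : Fin n → Fin n → ℝ) (r γ : ℝ) (hr : r ≠ 0)
    (S : Finset (Fin n)) (hS : ∀ α ∈ S, ∀ β ∈ S, A α β = 0) :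
    let xhat : ℝ := (r - 1) / r
    let F : (Fin n → ℝ) → (Fin n → ℝ) := fun x k =>
      r * x k * (1 - x k) * Real.exp (-γ * ∑ khat, A khat k * x khat)
    let ξ : Fin n → ℝ := fun k => if k ∈ S then xhat else 0
    let J : Matrix (Fin n) (Fin n) ℝ := Matrix.of fun k l =>
      fderiv ℝ (fun x => F x k) ξ (Pi.single l 1)
    J.charpoly = (X - C (2 - r)) ^ S.card *
      ∏ k ∈ Sᶜ, (X - C (r * Real.exp (-γ * xhat * ∑ α ∈ S, A α k))) := by
  intro xhat F ξ J
  have hJ : ∀ k l, J k l =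
      ((if k = l then r * (1 - 2 * ξ k) else 0) + r * ξ k * (1 - ξ k) * (-γ * A l k))
        * Real.exp (-γ * ∑ khat, A khat k * ξ khat) :=
    fun k l => fderiv_logistic n A r γ k l ξ
  have hsum : ∀ k, (∑ khat, A khat k * ξ khat) = xhat * ∑ α ∈ S, A α k := by
    intro k
    rw [Finset.mul_sum]
    rw [← Finset.sum_subset S.subset_univ (fun x _ hx => by simp [ξ, hx])]
    exact Finset.sum_congr rfl fun x hx => by simp [ξ, hx, mul_comm]
  -- diagonal entries on S
  have hdiagS : ∀ k ∈ S, J k k = 2 - r := by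
    intro k hk
    have hAkk : A k k = 0 := hS k hk k hk
    have hsum0 : (∑ α ∈ S, A α k) = 0 :=
      Finset.sum_eq_zero fun α hα => hS α hα k hk
    rw [hJ, hsum, hsum0, hAkk]
    simp only [if_pos rfl, mul_zero, zero_mul, neg_zero, add_zero, Real.exp_zero, mul_one]
    have : ξ k = xhat := by simp [ξ, hk]
    rw [this]
    show r * (1 - 2 * ((r - 1) / r)) = 2 - r
    field_simp
    ring
  -- off-diagonal entries within S vanish
  have hoffS : ∀ k ∈ S, ∀ l ∈ S, k ≠ l → J k l = 0 := by
    intro k hk l hl hkl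
    rw [hJ, if_neg hkl, hS l hl k hk]
    ring
  -- rows outside S vanish off the diagonal
  have hrow : ∀ k, k ∉ S → ∀ l, k ≠ l → J k l = 0 := by
    intro k hk l hkl
    have : ξ k = 0 := by simp [ξ, hk]
    rw [hJ, if_neg hkl, this]
    ring
  -- diagonal entries outside S
  have hdiagC : ∀ k, k ∉ S → J k k = r * Real.exp (-γ * xhat * ∑ α ∈ S, A α k) := by
    intro k hk
    have hξ : ξ k = 0 := by simp [ξ, hk]
    rw [hJ, hsum, hξ]
    simp only [if_pos rfl, mul_zero, zero_mul, add_zero, mul_one]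
    norm_num [mul_assoc]
  -- now compute the characteristic polynomial
  rw [Matrix.charpoly]
  set M := J.charmatrix with hM
  have hblock : ∀ i, ¬(i ∈ S) → ∀ j, j ∈ S → M i j = 0 := by
    intro i hi j hj
    have hij : i ≠ j := fun h => hi (h ▸ hj)
    rw [hM, Matrix.charmatrix_apply_ne _ _ _ hij, hrow i hi j hij, map_zero, neg_zero]
  rw [Matrix.twoBlockTriangular_det M (fun i => i ∈ S) hblock]
  have e1 : (Matrix.toSquareBlockProp M (fun i => i ∈ S)) =
      Matrix.diagonal (fun _ => (X : ℝ[X]) - C (2 - r)) := by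
    apply Matrix.ext; intro i j
    by_cases h : i = j
    · subst h
      rw [Matrix.diagonal_apply_eq]
      show M (i : Fin n) (i : Fin n) = _
      rw [hM, Matrix.charmatrix_apply_eq, hdiagS i i.2]
    · have hij : (i : Fin n) ≠ (j : Fin n) := fun hc => h (Subtype.ext hc)
      rw [Matrix.diagonal_apply_ne _ h]
      show M (i : Fin n) (j : Fin n) = 0
      rw [hM, Matrix.charmatrix_apply_ne _ _ _ hij, hoffS i i.2 j j.2 hij, map_zero, neg_zero]
  have e2 : (Matrix.toSquareBlockProp M (fun i => ¬(i ∈ S))) =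
      Matrix.diagonal (fun k : {a // ¬(a ∈ S)} =>
        (X : ℝ[X]) - C (r * Real.exp (-γ * xhat * ∑ α ∈ S, A α (k : Fin n)))) := by
    apply Matrix.ext; intro i j
    by_cases h : i = j
    · subst h
      rw [Matrix.diagonal_apply_eq]
      show M (i : Fin n) (i : Fin n) = _
      rw [hM, Matrix.charmatrix_apply_eq, hdiagC i i.2]
    · have hij : (i : Fin n) ≠ (j : Fin n) := fun hc => h (Subtype.ext hc)
      rw [Matrix.diagonal_apply_ne _ h]
      show M (i : Fin n) (j : Fin n) = 0
      rw [hM, Matrix.charmatrix_apply_ne _ _ _ hij, hrow i i.2 j hij, map_zero, neg_zero]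
  letI instS : Fintype {a // a ∈ S} := Subtype.fintype (fun i => i ∈ S)
  letI instC : Fintype {a // ¬ a ∈ S} := Subtype.fintype (fun i => ¬ i ∈ S)
  rw [e1, e2, Matrix.det_diagonal, Matrix.det_diagonal]
  congr 1
  · rw [Finset.prod_const]
    congr 1
    rw [Finset.card_univ]
    exact Fintype.card_coe S
  · exact (Finset.prod_subtype Sᶜ (fun x => Finset.mem_compl) fun k =>
      (X : ℝ[X]) - C (r * Real.exp (-γ * xhat * ∑ α ∈ S, A α k))).symm
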